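/- Lemma 4.2 (first part, for the kernel G). Assume that for every i ∈ I and every t ≥ 0 the map S i t is measurable with Measure.map (S i t) volume ≪ volume. Then for every finite measure μ on X with μ ≪ ℓ̄, the measure Gμ is absolutely continuous with respect to ℓ̄; equivalently, for every measurable A ⊆ X with ℓ̄ A = 0 one has ∫⁻ x, G(x,A) ∂μ = 0. -/

import Mathlib

open MeasureTheory ENNReal ProbabilityTheory Filter

noncomputable section

/-- The kernel `G` (deterministic flow until an exponential time, no jump). -/
def Gtrans {Y I' : Type*} [MeasurableSpace Y] (Λ : ℝ) (S : I' → ℝ → Y → Y)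
    (x : Y × I') (A : Set (Y × I')) : ℝ≥0∞ :=
  ∫⁻ t in Set.Ioi (0:ℝ),
    ENNReal.ofReal (Λ * Real.exp (-(Λ*t))) *
    Set.indicator A (fun _ => (1:ℝ≥0∞)) (S x.2 t x.1, x.2)

/-- **Lemma 4.2** (first part, for the kernel `G`). If every map `S i t`, `t ≥ 0`, is
measurable and nonsingular w.r.t. Lebesgue measure, then `G` preserves absolute continuity
with respect to `ℓ̄ = volume ⊗ count`. -/
theorem lem_4_2_G
    {d N : ℕ} (hd : 0 < d) (hN : 0 < N)
    (Λ : ℝ) (hΛ : 0 < Λ)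
    (S : Fin N → ℝ → EuclideanSpace ℝ (Fin d) → EuclideanSpace ℝ (Fin d))
    (hS_meas : ∀ i, Measurable (fun q : ℝ × EuclideanSpace ℝ (Fin d) => S i q.1 q.2))
    (hS_ns : ∀ i, ∀ t : ℝ, 0 ≤ t → Measurable (S i t) ∧
      (volume : Measure (EuclideanSpace ℝ (Fin d))).map (S i t) ≪ volume)
    (μ : Measure (EuclideanSpace ℝ (Fin d) × Fin N)) [IsFiniteMeasure μ]
    (hμ : μ ≪ (volume : Measure (EuclideanSpace ℝ (Fin d))).prod Measure.count) :
    ∀ A : Set (EuclideanSpace ℝ (Fin d) × Fin N), MeasurableSet A →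
      ((volume : Measure (EuclideanSpace ℝ (Fin d))).prod Measure.count) A = 0 →
      ∫⁻ x, Gtrans Λ S x A ∂μ = 0 := by
  intro A hA hA0
  have hc : Measurable fun t : ℝ => ENNReal.ofReal (Λ * Real.exp (-(Λ * t))) :=
    ((((measurable_id.const_mul Λ).neg).exp.const_mul Λ)).ennreal_ofReal
  -- slices of A
  have hAi : ∀ i : Fin N, MeasurableSet {y : EuclideanSpace ℝ (Fin d) | (y, i) ∈ A} := fun i =>
    hA.preimage measurable_prodMk_right
  have hAi0 : ∀ i : Fin N, volume {y : EuclideanSpace ℝ (Fin d) | (y, i) ∈ A} = 0 := by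
    intro i
    have hsub : {y : EuclideanSpace ℝ (Fin d) | (y, i) ∈ A} ×ˢ ({i} : Set (Fin N)) ⊆ A := by
      rintro ⟨y, j⟩ ⟨hy, hj⟩
      simp only [Set.mem_singleton_iff] at hj
      subst hj; exact hy
    have h1 : ((volume : Measure (EuclideanSpace ℝ (Fin d))).prod Measure.count)
        ({y : EuclideanSpace ℝ (Fin d) | (y, i) ∈ A} ×ˢ ({i} : Set (Fin N))) = 0 :=
      le_antisymm (hA0 ▸ measure_mono hsub) zero_le
    rwa [Measure.prod_prod, Measure.count_singleton, mul_one] at h1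
  -- rewrite the indicator in terms of slices
  have hind : ∀ (i : Fin N) (t : ℝ) (y : EuclideanSpace ℝ (Fin d)),
      Set.indicator A (fun _ => (1:ℝ≥0∞)) (S i t y, i)
        = Set.indicator {y' : EuclideanSpace ℝ (Fin d) | (y', i) ∈ A}
            (fun _ => (1:ℝ≥0∞)) (S i t y) := by
    intro i t y
    rfl
  have hind_meas : ∀ i : Fin N, Measurable fun p : EuclideanSpace ℝ (Fin d) × ℝ =>
      Set.indicator {y' : EuclideanSpace ℝ (Fin d) | (y', i) ∈ A}
        (fun _ => (1:ℝ≥0∞)) (S i p.2 p.1) := by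
    intro i
    have hg : Measurable fun p : EuclideanSpace ℝ (Fin d) × ℝ => S i p.2 p.1 :=
      (hS_meas i).comp measurable_swap
    have : (fun p : EuclideanSpace ℝ (Fin d) × ℝ =>
        Set.indicator {y' : EuclideanSpace ℝ (Fin d) | (y', i) ∈ A}
          (fun _ => (1:ℝ≥0∞)) (S i p.2 p.1))
        = Set.indicator ((fun p : EuclideanSpace ℝ (Fin d) × ℝ => S i p.2 p.1) ⁻¹'
            {y' : EuclideanSpace ℝ (Fin d) | (y', i) ∈ A}) (fun _ => (1:ℝ≥0∞)) := by
      funext p; rfl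
    rw [this]
    exact measurable_const.indicator (hg (hAi i))
  have hmeas_unc : ∀ i : Fin N, Measurable
      (Function.uncurry fun (y : EuclideanSpace ℝ (Fin d)) (t : ℝ) =>
        ENNReal.ofReal (Λ * Real.exp (-(Λ * t))) *
          Set.indicator {y' : EuclideanSpace ℝ (Fin d) | (y', i) ∈ A}
            (fun _ => (1:ℝ≥0∞)) (S i t y)) := fun i =>
    (hc.comp measurable_snd).mul (hind_meas i)
  -- measurability of G applied to A
  have hGi : ∀ i : Fin N,
      Measurable fun y : EuclideanSpace ℝ (Fin d) => Gtrans Λ S (y, i) A := by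
    intro i
    have : (fun y : EuclideanSpace ℝ (Fin d) => Gtrans Λ S (y, i) A)
        = fun y => ∫⁻ t in Set.Ioi (0:ℝ),
            ENNReal.ofReal (Λ * Real.exp (-(Λ*t))) *
              Set.indicator {y' : EuclideanSpace ℝ (Fin d) | (y', i) ∈ A}
                (fun _ => (1:ℝ≥0∞)) (S i t y) := by
      funext y; simp only [Gtrans, hind]
    rw [this]
    exact (hmeas_unc i).lintegral_prod_right
  have hGmeas : Measurable (fun x : EuclideanSpace ℝ (Fin d) × Fin N => Gtrans Λ S x A) :=
    measurable_from_prod_countable_left hGi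
  -- key: for each i the volume-integral of G((·,i),A) vanishes
  have key : ∀ i : Fin N,
      ∫⁻ y, Gtrans Λ S (y, i) A ∂(volume : Measure (EuclideanSpace ℝ (Fin d))) = 0 := by
    intro i
    calc ∫⁻ y, Gtrans Λ S (y, i) A ∂(volume : Measure (EuclideanSpace ℝ (Fin d)))
        = ∫⁻ y, ∫⁻ t in Set.Ioi (0:ℝ),
            ENNReal.ofReal (Λ * Real.exp (-(Λ*t))) *
              Set.indicator {y' : EuclideanSpace ℝ (Fin d) | (y', i) ∈ A}
                (fun _ => (1:ℝ≥0∞)) (S i t y)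
            ∂(volume : Measure ℝ) ∂(volume : Measure (EuclideanSpace ℝ (Fin d))) := by
          refine lintegral_congr fun y => ?_
          simp only [Gtrans, hind]
      _ = ∫⁻ t in Set.Ioi (0:ℝ), ∫⁻ y,
            ENNReal.ofReal (Λ * Real.exp (-(Λ*t))) *
              Set.indicator {y' : EuclideanSpace ℝ (Fin d) | (y', i) ∈ A}
                (fun _ => (1:ℝ≥0∞)) (S i t y)
            ∂(volume : Measure (EuclideanSpace ℝ (Fin d))) ∂(volume : Measure ℝ) :=
          lintegral_lintegral_swap (hmeas_unc i).aemeasurable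
      _ = 0 := by
          rw [← lintegral_zero (μ := (volume : Measure ℝ).restrict (Set.Ioi (0:ℝ)))]
          refine setLIntegral_congr_fun measurableSet_Ioi (fun t ht => ?_)
          have ht0 : (0:ℝ) ≤ t := le_of_lt ht
          have hmeasS : Measurable (S i t) := (hS_ns i t ht0).1
          have hpre : volume (S i t ⁻¹' {y' : EuclideanSpace ℝ (Fin d) | (y', i) ∈ A}) = 0 := by
            have h2 := (hS_ns i t ht0).2 (hAi0 i)
            rwa [Measure.map_apply hmeasS (hAi i)] at h2
          have hrw : (fun y : EuclideanSpace ℝ (Fin d) =>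
              Set.indicator {y' : EuclideanSpace ℝ (Fin d) | (y', i) ∈ A}
                (fun _ => (1:ℝ≥0∞)) (S i t y))
              = Set.indicator (S i t ⁻¹' {y' : EuclideanSpace ℝ (Fin d) | (y', i) ∈ A})
                  (fun _ => (1:ℝ≥0∞)) := by
            funext y; rfl
          have hmeas_ind : Measurable fun y : EuclideanSpace ℝ (Fin d) =>
              Set.indicator {y' : EuclideanSpace ℝ (Fin d) | (y', i) ∈ A}
                (fun _ => (1:ℝ≥0∞)) (S i t y) := by
            rw [hrw]; exact measurable_const.indicator (hmeasS (hAi i))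
          rw [lintegral_const_mul _ hmeas_ind, hrw,
            lintegral_indicator_const (hmeasS (hAi i)), hpre, mul_zero, mul_zero]
  -- hence the ℓ̄-integral of G(·,A) vanishes
  have hint : ∫⁻ x, Gtrans Λ S x A
      ∂((volume : Measure (EuclideanSpace ℝ (Fin d))).prod Measure.count) = 0 := by
    rw [lintegral_prod _ hGmeas.aemeasurable]
    have h3 : ∀ y : EuclideanSpace ℝ (Fin d),
        ∫⁻ i, Gtrans Λ S (y, i) A ∂(Measure.count : Measure (Fin N))
          = ∑' i, Gtrans Λ S (y, i) A := fun y => lintegral_count _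
    simp only [h3]
    rw [lintegral_tsum fun i => (hGi i).aemeasurable]
    simp [key]
  have hae : (fun x => Gtrans Λ S x A)
      =ᵐ[(volume : Measure (EuclideanSpace ℝ (Fin d))).prod Measure.count] 0 :=
    (lintegral_eq_zero_iff hGmeas).mp hint
  have hμae : (fun x => Gtrans Λ S x A) =ᵐ[μ] 0 := hμ.ae_le hae
  rw [lintegral_congr_ae hμae]
  simp
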